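/- Let q ≥ 3 be an odd integer and n ≥ 1 an integer, and suppose S = (s_i) is an orientable sequence of order n and odd period m over ℤ_q. Then A^{-1}(S) consists of one orientable sequence of order n+1 and period m, together with two shifts of each of (q−1)/2 orientable sequences of order n+1 and period 2m which are alternating sign translates of one another. -/

import Mathlib

namespace OSeq

variable {q : ℕ}

/-- The `n`-tuple (window) of the sequence `s` at position `i`. -/
def window (s : ℤ → ZMod q) (n : ℕ) (i : ℤ) : Fin n → ZMod q :=
  fun k => s (i + (k : ℕ))

/-- The reverse of an `n`-tuple. -/
def tupRev {n : ℕ} (u : Fin n → ZMod q) : Fin n → ZMod q :=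
  fun k => u k.rev

/-- `m` is the (least) period of the periodic sequence `s`. -/
def IsPeriod (s : ℤ → ZMod q) (m : ℕ) : Prop :=
  0 < m ∧ (∀ i : ℤ, s (i + (m : ℤ)) = s i) ∧
    ∀ m' : ℕ, 0 < m' → (∀ i : ℤ, s (i + (m' : ℤ)) = s i) → m ≤ m'

/-- `s` is an `n`-window sequence of period `m`. -/
def IsNWindowSeq (s : ℤ → ZMod q) (n m : ℕ) : Prop :=
  IsPeriod s m ∧ ∀ i j : ℤ, window s n i = window s n j → i ≡ j [ZMOD (m : ℤ)]

/-- `s` is an orientable sequence of order `n` and period `m`. -/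
def IsOS (s : ℤ → ZMod q) (n m : ℕ) : Prop :=
  IsNWindowSeq s n m ∧ ∀ i j : ℤ, window s n i ≠ tupRev (window s n j)

/-- `s` is a negative orientable sequence of order `n` and period `m`. -/
def IsNOS (s : ℤ → ZMod q) (n m : ℕ) : Prop :=
  IsNWindowSeq s n m ∧ ∀ i j : ℤ, window s n i ≠ - tupRev (window s n j)

/-- `s` is a special orientable sequence of order `n` and period `m`:
orientable and also negative orientable. -/
def IsSpecialOS (s : ℤ → ZMod q) (n m : ℕ) : Prop :=
  IsOS s n m ∧ ∀ i j : ℤ, window s n i ≠ - tupRev (window s n j)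

/-- The weight modulo `q` of one period of `s`. -/
def wq (s : ℤ → ZMod q) (m : ℕ) : ZMod q :=
  ∑ i ∈ Finset.range m, s (i : ℤ)

/-- The alternating sign weight modulo `q` of one period of `s`. -/
def wqA (s : ℤ → ZMod q) (m : ℕ) : ZMod q :=
  ∑ i ∈ Finset.range m, (-1 : ZMod q) ^ (m - 1 - i) * s (i : ℤ)

/-- The Lempel homomorphism `D` on sequences. -/
def D (t : ℤ → ZMod q) : ℤ → ZMod q := fun j => t (j + 1) - t j

/-- The homomorphism `A` on sequences. -/
def A (t : ℤ → ZMod q) : ℤ → ZMod q := fun j => t (j + 1) + t j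

/-- Shift of a sequence by `c`. -/
def shift (t : ℤ → ZMod q) (c : ℤ) : ℤ → ZMod q := fun i => t (i + c)

/-- `t'` is a translate of `t`. -/
def IsTranslate (t t' : ℤ → ZMod q) : Prop := ∃ c : ZMod q, ∀ i : ℤ, t' i = t i + c

/-- `t'` is an alternating sign translate of `t`. -/
def IsAltTranslate (t t' : ℤ → ZMod q) : Prop :=
  ∃ c : ZMod q, ∀ i : ℤ, t' i = t i + (if i % 2 = 0 then c else -c)

/-- Two sequences are (`n`-window) disjoint. -/
def WindowDisjoint (n : ℕ) (s t : ℤ → ZMod q) : Prop :=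
  ∀ i j : ℤ, window s n i ≠ window t n j

/-- Orientable-disjoint. -/
def ODisjoint (n : ℕ) (s t : ℤ → ZMod q) : Prop :=
  WindowDisjoint n s t ∧ ∀ i j : ℤ, window s n i ≠ tupRev (window t n j)

/-- Negative orientable-disjoint (no-disjoint). -/
def NODisjoint (n : ℕ) (s t : ℤ → ZMod q) : Prop :=
  WindowDisjoint n s t ∧ ∀ i j : ℤ, window s n i ≠ - tupRev (window t n j)

/-- Special-orientable-disjoint. -/
def SpecialODisjoint (n : ℕ) (s t : ℤ → ZMod q) : Prop :=
  ODisjoint n s t ∧ ∀ i j : ℤ, window s n i ≠ - tupRev (window t n j)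

/-- The string `a^t` appears in `s`. -/
def HasString (s : ℤ → ZMod q) (a : ZMod q) (t : ℕ) : Prop :=
  ∃ j : ℤ, ∀ k : ℕ, k < t → s (j + (k : ℤ)) = a

/-- There is a run `a^t` of `a` in `s` starting at position `j`. -/
def IsRunAt (s : ℤ → ZMod q) (a : ZMod q) (j : ℤ) (t : ℕ) : Prop :=
  (∀ k : ℕ, k < t → s (j + (k : ℤ)) = a) ∧ s (j - 1) ≠ a ∧ s (j + (t : ℤ)) ≠ a

/-- `a^t` is a maximal run of `a` in `s`: the string `a^t` appears and every
string `a^{t'}` appearing in `s` has `t' ≤ t`. -/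
def IsMaxRun (s : ℤ → ZMod q) (a : ZMod q) (t : ℕ) : Prop :=
  HasString s a t ∧ ∀ t' : ℕ, HasString s a t' → t' ≤ t

/-- `k`-th entry of the alternating string `a, -a, a, -a, ...`. -/
def altVal (a : ZMod q) (k : ℕ) : ZMod q := if k % 2 = 0 then a else -a

/-- The signed string `ạ^t` (alternating `a, -a, ...`) appears in `s`. -/
def HasSignedString (s : ℤ → ZMod q) (a : ZMod q) (t : ℕ) : Prop :=
  ∃ j : ℤ, ∀ k : ℕ, k < t → s (j + (k : ℤ)) = altVal a k

/-- There is a signed run `ạ^t` of `a` in `s` starting at position `j`. -/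
def IsSignedRunAt (s : ℤ → ZMod q) (a : ZMod q) (j : ℤ) (t : ℕ) : Prop :=
  (∀ k : ℕ, k < t → s (j + (k : ℤ)) = altVal a k) ∧
    s (j - 1) ≠ -a ∧ s (j + (t : ℤ)) ≠ altVal a t

/-- `ạ^t` is a maximal signed run of `a` in `s`. -/
def IsMaxSignedRun (s : ℤ → ZMod q) (a : ZMod q) (t : ℕ) : Prop :=
  HasSignedString s a t ∧ ∀ t' : ℕ, HasSignedString s a t' → t' ≤ t

/-- The sequence obtained from the ring sequence `[s_0,...,s_{m-1}]` of `s` by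
inserting one extra symbol `a` at ring position `r`, i.e. with ring sequence
`[s_0,...,s_{r-1}, a, s_r, ..., s_{m-1}]` of length `m+1`. -/
def insert1 (s : ℤ → ZMod q) (m r : ℕ) (a : ZMod q) : ℤ → ZMod q :=
  fun j =>
    let j' := (j % ((m : ℤ) + 1)).toNat
    if j' < r then s (j' : ℤ) else if j' = r then a else s ((j' : ℤ) - 1)

/-- The sequence obtained from the ring sequence `[s_0,...,s_{m-1}]` of `s` by
inserting the two symbols `a, -a` at ring position `r`, i.e. with ring sequence
`[s_0,...,s_{r-1}, a, -a, s_r, ..., s_{m-1}]` of length `m+2`. -/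
def insert2 (s : ℤ → ZMod q) (m r : ℕ) (a : ZMod q) : ℤ → ZMod q :=
  fun j =>
    let j' := (j % ((m : ℤ) + 2)).toNat
    if j' < r then s (j' : ℤ)
    else if j' = r then a
    else if j' = r + 1 then -a
    else s ((j' : ℤ) - 2)

/-- The operation `E_a` (with the convention `E_0(S) = S`). -/
def Emod (s : ℤ → ZMod q) (m r : ℕ) (a : ZMod q) : ℤ → ZMod q :=
  if a = 0 then s else insert1 s m r a

/-- A sequence is good (for order `n`) if every run of `0` has length at most `n-2`. -/
def GoodSeq (s : ℤ → ZMod q) (n : ℕ) : Prop :=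
  ∀ t : ℕ, HasString s 0 t → t ≤ n - 2

/-- A tuple is uniform if it is constant. -/
def Uniform {n : ℕ} (u : Fin n → ZMod q) : Prop := ∃ c : ZMod q, ∀ i, u i = c

/-- A tuple is symmetric if it equals its own reverse. -/
def Symm {n : ℕ} (u : Fin n → ZMod q) : Prop := ∀ i : Fin n, u i = u i.rev

/-- An `n`-tuple is `m`-symmetric (`m ≤ n`) if `u_i = u_{m-1-i}` for `0 ≤ i ≤ m-1`. -/
def MSymm {n : ℕ} (u : Fin n → ZMod q) (m : ℕ) (hm : m ≤ n) : Prop :=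
  ∀ i : Fin m, u (Fin.castLE hm i) = u (Fin.castLE hm i.rev)

/-- An `n`-tuple (`n ≥ 2`) is alternating. -/
def Alternating {n : ℕ} (hn : 2 ≤ n) (u : Fin n → ZMod q) : Prop :=
  u ⟨0, by omega⟩ ≠ u ⟨1, by omega⟩ ∧
    ∀ i : Fin n, u i = if (i : ℕ) % 2 = 0 then u ⟨0, by omega⟩ else u ⟨1, by omega⟩

/-- `L_n(v)`: the set of `n`-tuples whose first `n-r` entries agree with the
`(n-r)`-tuple `v`. -/
def Lset (n r : ℕ) (v : Fin (n - r) → ZMod q) : Set (Fin n → ZMod q) :=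
  {u | ∀ i : Fin (n - r), u (Fin.castLE (Nat.sub_le n r) i) = v i}

/-- The `n`-tuple `u` appears in the sequence `s`. -/
def AppearsIn (s : ℤ → ZMod q) (n : ℕ) (u : Fin n → ZMod q) : Prop :=
  ∃ i : ℤ, window s n i = u




/-- sign (-1)^j for integer j -/
def eps (q : ℕ) : ℤ → ZMod q := fun j => if j % 2 = 0 then 1 else -1

lemma eps_sq (j : ℤ) : eps q j * eps q j = 1 := by
  unfold eps; split <;> ring

lemma eps_succ (j : ℤ) : eps q (j + 1) = - eps q j := by
  unfold eps
  split <;> split <;> first | (exfalso; omega) | ring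

/-- alternating partial sums of s, defined on all of ℤ -/
def Gs (s : ℤ → ZMod q) : ℤ → ZMod q := fun j =>
  if 0 ≤ j then ∑ k ∈ Finset.range j.toNat, eps q k * s k
  else - ∑ k ∈ Finset.range (-j).toNat, eps q (-1 - (k : ℤ)) * s (-1 - (k : ℤ))

lemma Gs_zero (s : ℤ → ZMod q) : Gs s 0 = 0 := by simp [Gs]

lemma Gs_succ (s : ℤ → ZMod q) (j : ℤ) : Gs s (j + 1) = Gs s j + eps q j * s j := by
  unfold Gs
  rcases le_or_gt 0 j with hj | hj
  · rw [if_pos (show (0:ℤ) ≤ j + 1 by omega), if_pos hj]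
    have h1 : (j + 1).toNat = j.toNat + 1 := by omega
    have h2 : ((j.toNat : ℕ) : ℤ) = j := by omega
    rw [h1, Finset.sum_range_succ, h2]
  · rw [if_neg (by omega : ¬ (0:ℤ) ≤ j)]
    rcases eq_or_lt_of_le (by omega : j + 1 ≤ 0) with h0 | h0
    · have hj1 : j = -1 := by omega
      subst hj1
      rw [show ((-1:ℤ)+1) = 0 by ring, if_pos le_rfl]
      simp [Finset.sum_range_one]
    · rw [if_neg (by omega : ¬ (0:ℤ) ≤ j + 1)]
      have h2 : (-j).toNat = (-(j+1)).toNat + 1 := by omega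
      have h3 : (((-(j+1)).toNat : ℕ) : ℤ) = -(j+1) := by omega
      rw [h2, Finset.sum_range_succ, h3]
      rw [show (-1 - -(j+1)) = j by ring]
      ring

/-- the solution of A t = s with t 0 = c -/
def Tc (s : ℤ → ZMod q) (c : ZMod q) : ℤ → ZMod q := fun j => eps q j * (c - Gs s j)

lemma Tc_zero (s : ℤ → ZMod q) (c : ZMod q) : Tc s c 0 = c := by
  simp [Tc, Gs_zero, eps]

lemma Tc_succ (s : ℤ → ZMod q) (c : ZMod q) (j : ℤ) :
    Tc s c (j + 1) = s j - Tc s c j := by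
  unfold Tc
  rw [eps_succ, Gs_succ]
  linear_combination (s j) * eps_sq (q := q) j



lemma A_Tc (s : ℤ → ZMod q) (c : ZMod q) : A (Tc s c) = s := by
  funext j
  show Tc s c (j + 1) + Tc s c j = s j
  rw [Tc_succ]; ring

lemma eq_Tc {s t : ℤ → ZMod q} (ht : A t = s) : t = Tc s (t 0) := by
  funext j
  induction j using Int.induction_on with
  | zero => rw [Tc_zero]
  | succ k ih =>
      have h1 : t ((k:ℤ) + 1) + t (k:ℤ) = s (k:ℤ) := congrFun ht (k:ℤ)
      rw [Tc_succ, ← ih]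
      linear_combination h1
  | pred k ih =>
      have h1 : t ((-(k:ℤ) - 1) + 1) + t (-(k:ℤ) - 1) = s (-(k:ℤ) - 1) :=
        congrFun ht (-(k:ℤ) - 1)
      have h2 := Tc_succ s (t 0) (-(k:ℤ) - 1)
      have e : (-(k:ℤ) - 1) + 1 = -(k:ℤ) := by ring
      rw [e] at h1 h2
      linear_combination h1 - h2 - ih

lemma Tc_eval_inj {s : ℤ → ZMod q} {c c' : ZMod q} {i : ℤ}
    (h : Tc s c i = Tc s c' i) : c = c' := by
  unfold Tc at h
  have h2 : eps q i * (eps q i * (c - Gs s i)) = eps q i * (eps q i * (c' - Gs s i)) := by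
    rw [h]
  rw [← mul_assoc, ← mul_assoc, eps_sq, one_mul, one_mul] at h2
  exact sub_left_inj.mp h2

lemma eps_m {m : ℕ} (hmodd : Odd m) : eps q (m : ℤ) = -1 := by
  have : (m:ℤ) % 2 = 1 := by
    obtain ⟨r, hr⟩ := hmodd; omega
  unfold eps
  rw [if_neg (by omega)]

lemma Tc_m {s : ℤ → ZMod q} {m : ℕ} (hmodd : Odd m) (c : ZMod q) :
    Tc s c (m : ℤ) = Gs s (m : ℤ) - c := by
  unfold Tc
  rw [eps_m hmodd]; ring

lemma Tc_shift {s : ℤ → ZMod q} {m : ℕ} (hper : ∀ i : ℤ, s (i + (m:ℤ)) = s i)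
    (hmodd : Odd m) (c : ZMod q) (j : ℤ) :
    Tc s c (j + (m:ℤ)) = Tc s (Gs s (m:ℤ) - c) j := by
  have hA : A (fun j => Tc s c (j + (m:ℤ))) = s := by
    funext i
    show Tc s c (i + 1 + (m:ℤ)) + Tc s c (i + (m:ℤ)) = s i
    have e : i + 1 + (m:ℤ) = (i + (m:ℤ)) + 1 := by ring
    rw [e, Tc_succ, hper i]; ring
  have h0 := eq_Tc hA
  have h1 : Tc s c ((0:ℤ) + (m:ℤ)) = Gs s (m:ℤ) - c := by
    rw [zero_add, Tc_m hmodd]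
  calc Tc s c (j + (m:ℤ)) = Tc s (Tc s c ((0:ℤ) + (m:ℤ))) j := congrFun h0 j
    _ = Tc s (Gs s (m:ℤ) - c) j := by rw [h1]

lemma Tc_per2m {s : ℤ → ZMod q} {m : ℕ} (hper : ∀ i : ℤ, s (i + (m:ℤ)) = s i)
    (hmodd : Odd m) (c : ZMod q) (j : ℤ) :
    Tc s c (j + ((2*m : ℕ) : ℤ)) = Tc s c j := by
  have e : j + ((2*m : ℕ) : ℤ) = (j + (m:ℤ)) + (m:ℤ) := by push_cast; ring
  rw [e, Tc_shift hper hmodd, Tc_shift hper hmodd]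
  congr 1; ring

lemma per_mul {t : ℤ → ZMod q} {p : ℤ} (h : ∀ i, t (i + p) = t i) :
    ∀ (a : ℤ) (i : ℤ), t (i + a * p) = t i := by
  have hneg : ∀ i, t (i - p) = t i := by
    intro i
    have := h (i - p)
    rw [sub_add_cancel] at this
    exact this.symm
  intro a
  induction a using Int.induction_on with
  | zero => intro i; simp
  | succ k ih =>
      intro i
      have e : i + ((k:ℤ)+1) * p = (i + p) + (k:ℤ) * p := by ring
      rw [e, ih, h]
  | pred k ih =>
      intro i
      have e : i + (-(k:ℤ)-1) * p = (i - p) + (-(k:ℤ)) * p := by ring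
      rw [e, ih, hneg]

lemma per_gcd {t : ℤ → ZMod q} {a b : ℕ} (ha : ∀ i, t (i + (a:ℤ)) = t i)
    (hb : ∀ i, t (i + (b:ℤ)) = t i) : ∀ i, t (i + (Nat.gcd a b : ℤ)) = t i := by
  intro i
  have hg : ((Nat.gcd a b : ℕ) : ℤ) = (a:ℤ) * Int.gcdA a b + (b:ℤ) * Int.gcdB a b := by
    have h1 := Int.gcd_eq_gcd_ab (a:ℤ) (b:ℤ)
    rwa [Int.gcd_natCast_natCast] at h1
  rw [hg, show i + ((a:ℤ) * Int.gcdA a b + (b:ℤ) * Int.gcdB a b)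
      = (i + (Int.gcdA a b) * (a:ℤ)) + (Int.gcdB a b) * (b:ℤ) by ring,
    per_mul hb, per_mul ha]


lemma window_A_eq {s t : ℤ → ZMod q} (ht : A t = s) {n : ℕ} {i j : ℤ}
    (h : window t (n+1) i = window t (n+1) j) : window s n i = window s n j := by
  funext k
  have h1 := congrFun h k.castSucc
  have h2 := congrFun h k.succ
  simp only [window, Fin.coe_castSucc, Fin.val_succ] at h1 h2
  show s (i + (k:ℕ)) = s (j + (k:ℕ))
  rw [← ht]
  show t (i + (k:ℕ) + 1) + t (i + (k:ℕ)) = t (j + (k:ℕ) + 1) + t (j + (k:ℕ))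
  have e1 : ∀ x:ℤ, x + (((k:ℕ)+1 : ℕ):ℤ) = x + (k:ℕ) + 1 := by intro x; push_cast; ring
  rw [e1 i, e1 j] at h2
  rw [h1, h2]

lemma window_A_rev {s t : ℤ → ZMod q} (ht : A t = s) {n : ℕ} {i j : ℤ}
    (h : window t (n+1) i = tupRev (window t (n+1) j)) :
    window s n i = tupRev (window s n j) := by
  funext k
  have hk := k.isLt
  have h1 := congrFun h k.castSucc
  have h2 := congrFun h k.succ
  simp only [window, tupRev, Fin.coe_castSucc, Fin.val_succ, Fin.val_rev] at h1 h2
  show s (i + (k:ℕ)) = s (j + ((n - ((k:ℕ)+1) : ℕ) : ℤ))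
  rw [← ht]
  show t (i + (k:ℕ) + 1) + t (i + (k:ℕ))
      = t (j + ((n - ((k:ℕ)+1) : ℕ):ℤ) + 1) + t (j + ((n - ((k:ℕ)+1) : ℕ):ℤ))
  have e1 : i + (((k:ℕ)+1 : ℕ):ℤ) = i + (k:ℕ) + 1 := by push_cast; ring
  have e2 : j + ((n + 1 - ((k:ℕ)+1) : ℕ):ℤ) = j + ((n - ((k:ℕ)+1) : ℕ):ℤ) + 1 := by omega
  have e3 : j + ((n + 1 - ((k:ℕ)+1+1) : ℕ):ℤ) = j + ((n - ((k:ℕ)+1) : ℕ):ℤ) := by omega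
  rw [e2] at h1
  rw [e1, e3] at h2
  rw [h1, h2]; ring

end OSeq

open OSeq
/-- If `q ≥ 3` is odd and `S` is an orientable sequence of order `n` and odd
period `m` over `ℤ_q`, then `A⁻¹(S)` consists of one orientable sequence of order
`n+1` and period `m`, together with two shifts of each of `(q-1)/2` orientable
sequences of order `n+1` and period `2m` which are alternating sign translates
of one another. -/
theorem Ainv_of_orientable_odd_period {q n m : ℕ} (hq : 3 ≤ q) (hqodd : Odd q)
    (hn : 1 ≤ n) (s : ℤ → ZMod q) (hS : IsOS s n m) (hm : Odd m) :
    ∃ (T₀ : ℤ → ZMod q) (F : Fin ((q - 1) / 2) → ℤ → ZMod q),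
      A T₀ = s ∧ IsOS T₀ (n + 1) m ∧
      (∀ k, A (F k) = s ∧ IsOS (F k) (n + 1) (2 * m)) ∧
      (∀ k k', IsAltTranslate (F k) (F k')) ∧
      (∀ t : ℤ → ZMod q, A t = s ↔
        (t = T₀ ∨ ∃ (k : Fin ((q - 1) / 2)) (α : Fin 2),
          t = shift (F k) ((α : ℕ) * (m : ℤ)))) ∧
      (∀ (k : Fin ((q - 1) / 2)) (α : Fin 2), shift (F k) ((α : ℕ) * (m : ℤ)) ≠ T₀) ∧
      Function.Injective
        (fun p : Fin ((q - 1) / 2) × Fin 2 => shift (F p.1) ((p.2 : ℕ) * (m : ℤ))) := by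
  obtain ⟨⟨⟨hm0, hsper, hsmin⟩, hwin⟩, hrev⟩ := hS
  haveI : NeZero q := ⟨by omega⟩
  have hq2 : ¬ (2 ∣ q) := by rcases hqodd with ⟨r, hr⟩; omega
  have hcop : Nat.Coprime 2 q := (Nat.prime_two.coprime_iff_not_dvd).mpr hq2
  set u2 : (ZMod q)ˣ := ZMod.unitOfCoprime 2 hcop with hu2
  have hu2v : (u2 : ZMod q) = 2 := by
    rw [hu2, ZMod.coe_unitOfCoprime]; norm_num
  set w : ZMod q := Gs s (m:ℤ) with hw
  set c₀ : ZMod q := ((u2⁻¹ : (ZMod q)ˣ) : ZMod q) * w with hc0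
  have h2c0 : 2 * c₀ = w := by
    rw [hc0, ← hu2v, ← mul_assoc]
    rw [show ((u2 : ZMod q) * ((u2⁻¹ : (ZMod q)ˣ) : ZMod q)) = 1 from by
      rw [← Units.val_mul, mul_inv_cancel, Units.val_one]]
    rw [one_mul]
  have two_cancel : ∀ x : ZMod q, 2 * x = 0 → x = 0 := by
    intro x hx
    have h1 : ((u2⁻¹ : (ZMod q)ˣ) : ZMod q) * (2 * x) = 0 := by rw [hx, mul_zero]
    rw [← hu2v, ← mul_assoc,
      show (((u2⁻¹ : (ZMod q)ˣ) : ZMod q) * (u2 : ZMod q)) = 1 from by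
        rw [← Units.val_mul, inv_mul_cancel, Units.val_one], one_mul] at h1
    exact h1
  have hhalf : 2 * ((q-1)/2) = q - 1 := by rcases hqodd with ⟨r, hr⟩; omega
  set cK : Fin ((q-1)/2) → ZMod q := fun k => c₀ + (((k:ℕ)+1 : ℕ) : ZMod q) with hcK
  have hKne : ∀ k : Fin ((q-1)/2), (((k:ℕ)+1 : ℕ) : ZMod q) ≠ 0 := by
    intro k hk0
    rw [ZMod.natCast_eq_zero_iff] at hk0
    have hlt := k.isLt
    have := Nat.le_of_dvd (by omega) hk0
    omega
  have hsum_ne : ∀ k k' : Fin ((q-1)/2),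
      (((k:ℕ)+1 : ℕ) : ZMod q) + (((k':ℕ)+1 : ℕ) : ZMod q) ≠ 0 := by
    intro k k' hk0
    have hk0' : ((((k:ℕ)+1) + ((k':ℕ)+1) : ℕ) : ZMod q) = 0 := by push_cast; push_cast at hk0; linear_combination hk0
    rw [ZMod.natCast_eq_zero_iff] at hk0'
    have hlt := k.isLt
    have hlt' := k'.isLt
    have := Nat.le_of_dvd (by omega) hk0'
    omega
  have hinj : ∀ k k' : Fin ((q-1)/2),
      (((k:ℕ)+1 : ℕ) : ZMod q) = (((k':ℕ)+1 : ℕ) : ZMod q) → k = k' := by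
    intro k k' hkk
    have hlt := k.isLt
    have hlt' := k'.isLt
    have h1 := congrArg ZMod.val hkk
    rw [ZMod.val_cast_of_lt (by omega), ZMod.val_cast_of_lt (by omega)] at h1
    exact Fin.ext (by omega)
  clear_value u2 w c₀ cK
  have hc_ne : ∀ k, cK k ≠ c₀ := by
    intro k h
    simp only [hcK] at h
    exact hKne k (by rwa [add_eq_left] at h)
  have hw_sub : w - c₀ = c₀ := by linear_combination - h2c0
  have hrep : ∀ c : ZMod q, c ≠ c₀ →
      ∃ k : Fin ((q-1)/2), c = c₀ + (((k:ℕ)+1 : ℕ) : ZMod q) ∨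
        c = c₀ - (((k:ℕ)+1 : ℕ) : ZMod q) := by
    intro c hc
    set d : ZMod q := c - c₀ with hd
    have hd0 : d ≠ 0 := sub_ne_zero.mpr hc
    have hv : d.val < q := ZMod.val_lt d
    have hv0 : 0 < d.val := ZMod.val_pos.mpr hd0
    have hdc : ((d.val : ℕ) : ZMod q) = d := ZMod.natCast_rightInverse d
    rcases le_or_gt d.val ((q-1)/2) with hle | hgt
    · refine ⟨⟨d.val - 1, by omega⟩, Or.inl ?_⟩
      show c = c₀ + (((d.val - 1)+1 : ℕ) : ZMod q)
      rw [show (d.val - 1) + 1 = d.val from by omega, hdc, hd]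
      ring
    · refine ⟨⟨q - d.val - 1, by omega⟩, Or.inr ?_⟩
      show c = c₀ - (((q - d.val - 1)+1 : ℕ) : ZMod q)
      rw [show (q - d.val - 1) + 1 = q - d.val from by omega]
      have h1 : ((q - d.val : ℕ) : ZMod q) = -d := by
        rw [Nat.cast_sub (le_of_lt hv), ZMod.natCast_self, hdc]; ring
      rw [h1, hd]; ring
  set T₀ : ℤ → ZMod q := Tc s c₀ with hT0
  set F : Fin ((q-1)/2) → ℤ → ZMod q := fun k => Tc s (cK k) with hF
  clear_value T₀ F
  have hAper : ∀ t : ℤ → ZMod q, A t = s → ∀ m' : ℕ, 0 < m' →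
      (∀ i, t (i + (m':ℤ)) = t i) → m ≤ m' := by
    intro t ht m' hm' hp
    apply hsmin m' hm'
    intro i
    have e : i + (m':ℤ) + 1 = (i + 1) + (m':ℤ) := by ring
    calc s (i + (m':ℤ)) = t (i + (m':ℤ) + 1) + t (i + (m':ℤ)) := (congrFun ht (i+(m':ℤ))).symm
      _ = t (i + 1) + t i := by rw [e, hp (i+1), hp i]
      _ = s i := congrFun ht i
  have hwinT : ∀ t : ℤ → ZMod q, A t = s → ∀ i j : ℤ,
      window t (n+1) i = window t (n+1) j → i ≡ j [ZMOD (m:ℤ)] :=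
    fun t ht i j h => hwin i j (window_A_eq ht h)
  have hrevT : ∀ t : ℤ → ZMod q, A t = s → ∀ i j : ℤ,
      window t (n+1) i ≠ tupRev (window t (n+1) j) :=
    fun t ht i j h => hrev i j (window_A_rev ht h)
  have hAT0 : A T₀ = s := by rw [hT0]; exact A_Tc s c₀
  have hAF : ∀ k, A (F k) = s := by intro k; simp only [hF]; exact A_Tc s (cK k)
  have hT0per : ∀ i : ℤ, T₀ (i + (m:ℤ)) = T₀ i := by
    intro i
    rw [hT0, Tc_shift hsper hm, ← hw, hw_sub]
  have hFper2 : ∀ k, ∀ i : ℤ, F k (i + ((2*m : ℕ):ℤ)) = F k i := by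
    intro k i
    rw [hF]
    exact Tc_per2m hsper hm (cK k) i
  have hT0_0 : T₀ 0 = c₀ := by rw [hT0]; exact Tc_zero s c₀
  have hF0 : ∀ k, F k 0 = cK k := by intro k; simp only [hF]; exact Tc_zero s (cK k)
  have hFshift : ∀ k, ∀ j : ℤ, F k (j + (m:ℤ)) = Tc s (w - cK k) j := by
    intro k j
    rw [hF]
    simp only []
    rw [Tc_shift hsper hm, ← hw]
  have hs0 : ∀ k (α : Fin 2), (α:ℕ) = 0 → shift (F k) (((α:ℕ):ℤ) * (m:ℤ)) = F k := by
    intro k α hα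
    funext i
    show F k (i + ((α:ℕ):ℤ) * (m:ℤ)) = F k i
    rw [hα]
    norm_num
  have hs1 : ∀ k (α : Fin 2), (α:ℕ) = 1 →
      shift (F k) (((α:ℕ):ℤ) * (m:ℤ)) = Tc s (w - cK k) := by
    intro k α hα
    funext i
    show F k (i + ((α:ℕ):ℤ) * (m:ℤ)) = Tc s (w - cK k) i
    rw [hα]
    norm_num
    exact hFshift k i
  have hα2 : ∀ α : Fin 2, (α:ℕ) = 0 ∨ (α:ℕ) = 1 := by decide
  have hwk_ne : ∀ k, w - cK k ≠ c₀ := by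
    intro k h
    apply hc_ne k
    linear_combination hw_sub - h
  have hwk_ne' : ∀ k k', w - cK k ≠ cK k' := by
    intro k k' h
    apply hsum_ne k k'
    simp only [hcK] at h
    linear_combination - h2c0 - h
  refine ⟨T₀, F, hAT0, ?_, ?_, ?_, ?_, ?_, ?_⟩
  · -- IsOS T₀ (n+1) m
    exact ⟨⟨⟨hm0, hT0per, hAper T₀ hAT0⟩, hwinT T₀ hAT0⟩, hrevT T₀ hAT0⟩
  · -- ∀ k, A (F k) = s ∧ IsOS (F k) (n+1) (2m)
    intro k
    refine ⟨hAF k, ⟨⟨⟨by omega, hFper2 k, ?_⟩, ?_⟩, hrevT (F k) (hAF k)⟩⟩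
    · -- minimality of 2m
      intro m' hm' hp
      by_contra hlt
      push_neg at hlt
      have hg := per_gcd hp (hFper2 k)
      set g := Nat.gcd m' (2*m) with hgdef
      have hgpos : 0 < g := Nat.gcd_pos_of_pos_left _ hm'
      have hmg : m ≤ g := hAper (F k) (hAF k) g hgpos hg
      have hgd : g ∣ 2*m := Nat.gcd_dvd_right _ _
      have hgle : g ≤ m' := Nat.le_of_dvd hm' (Nat.gcd_dvd_left _ _)
      have hgm : g = m := by
        obtain ⟨e, he⟩ := hgd
        rcases e with _ | _ | e
        · omega
        · omega
        · have h2 : g * 2 ≤ g * (e + 2) := Nat.mul_le_mul (le_refl g) (by omega)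
          rw [← he] at h2
          omega
      have h0 := hg 0
      rw [hgm, zero_add] at h0
      have hFm : F k (m:ℤ) = w - cK k := by
        have := hFshift k 0
        rw [zero_add] at this
        rw [this, Tc_zero]
      rw [hFm, hF0] at h0
      exact hwk_ne' k k h0
    · -- window property for F k at period 2m
      intro i j h
      have hmod := hwinT (F k) (hAF k) i j h
      have ht0 : F k i = F k j := by
        have h00 := congrFun h ⟨0, by omega⟩
        simpa [window] using h00
      obtain ⟨e, he⟩ : (m:ℤ) ∣ (j - i) := Int.ModEq.dvd hmod
      rcases Int.even_or_odd e with ⟨f, hf⟩ | ⟨f, hf⟩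
      · refine Int.modEq_iff_dvd.mpr ⟨f, ?_⟩
        subst hf
        push_cast
        linear_combination he
      · exfalso
        have e1 : j = (i + (m:ℤ)) + f * ((2*m : ℕ):ℤ) := by
          subst hf
          push_cast
          linear_combination he
        have h2 : F k j = Tc s (w - cK k) i := by
          rw [e1, per_mul (hFper2 k) f (i + (m:ℤ)), hFshift k i]
        have h3 : Tc s (cK k) i = Tc s (w - cK k) i := by
          have h4 := ht0.trans h2
          simp only [hF] at h4
          exact h4
        exact hwk_ne' k k (Tc_eval_inj h3).symm
  · -- alternating sign translates
    intro k k'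
    refine ⟨cK k' - cK k, ?_⟩
    intro i
    simp only [hF, Tc, eps]
    split_ifs with h
    · ring
    · ring
  · -- classification of A⁻¹(s)
    intro t
    constructor
    · intro ht
      have htc := eq_Tc ht
      by_cases hc : t 0 = c₀
      · left; rw [htc, hc, hT0]
      · right
        obtain ⟨k, hk | hk⟩ := hrep (t 0) hc
        · refine ⟨k, 0, ?_⟩
          rw [hs0 k 0 rfl, htc, hk]
          simp only [hF, hcK]
        · refine ⟨k, 1, ?_⟩
          rw [hs1 k 1 rfl, htc, hk,
            show c₀ - (((k:ℕ)+1 : ℕ) : ZMod q) = w - cK k from by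
              simp only [hcK]; linear_combination h2c0]
    · intro ht
      rcases ht with rfl | ⟨k, α, rfl⟩
      · exact hAT0
      · rcases hα2 α with h0 | h1
        · rw [hs0 k α h0]; exact hAF k
        · rw [hs1 k α h1]; exact A_Tc s _
  · -- shifts differ from T₀
    intro k α h
    rcases hα2 α with h0 | h1
    · rw [hs0 k α h0] at h
      have h1 := congrFun h 0
      rw [hF0, hT0_0] at h1
      exact hc_ne k h1
    · rw [hs1 k α h1] at h
      have h2 := congrFun h 0
      rw [Tc_zero, hT0_0] at h2
      exact hwk_ne k h2
  · -- injectivity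
    intro p p' h
    obtain ⟨k, α⟩ := p
    obtain ⟨k', α'⟩ := p'
    simp only at h
    rcases hα2 α with h0 | h1 <;> rcases hα2 α' with h0' | h1'
    · rw [hs0 k α h0, hs0 k' α' h0'] at h
      have h1 := congrFun h 0
      rw [hF0, hF0] at h1
      simp only [hcK] at h1
      have hk := hinj k k' (add_left_cancel h1)
      simp only [Prod.mk.injEq]
      exact ⟨hk, Fin.ext (by omega)⟩
    · rw [hs0 k α h0, hs1 k' α' h1'] at h
      have h1 := congrFun h 0
      rw [hF0, Tc_zero] at h1
      exact absurd h1.symm (hwk_ne' k' k)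
    · rw [hs1 k α h1, hs0 k' α' h0'] at h
      have h2 := congrFun h 0
      rw [Tc_zero, hF0] at h2
      exact absurd h2 (hwk_ne' k k')
    · rw [hs1 k α h1, hs1 k' α' h1'] at h
      have h2 := congrFun h 0
      rw [Tc_zero, Tc_zero] at h2
      have hck : cK k = cK k' := by linear_combination - h2
      simp only [hcK] at hck
      have hk := hinj k k' (add_left_cancel hck)
      simp only [Prod.mk.injEq]
      exact ⟨hk, Fin.ext (by omega)⟩
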